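/- Let f(x₁,…,xₙ) = Σᵢ₌₁ⁿ aᵢ ℓᵢ(x)^d where the ℓᵢ are n linearly independent linear forms over a field K of characteristic 0, the aᵢ are nonzero constants, and d ≥ 2. Then the Hessian determinant of f equals c·∏ᵢ₌₁ⁿ ℓᵢ(x)^{d-2} for some nonzero constant c ∈ K; in particular det H_f is not identically 0. -/

import Mathlib

open MvPolynomial Matrix

/-- If `f = Σᵢ aᵢ ℓᵢ^d` with the `ℓᵢ` linearly independent linear forms, the `aᵢ`
nonzero and `d ≥ 2`, then `det H_f = c ∏ᵢ ℓᵢ^(d-2)` for some nonzero constant `c`;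
in particular `det H_f ≠ 0`. -/
theorem hessian_det_of_sum_of_powers {K : Type*} [Field K] [CharZero K] {n : ℕ}
    (a : Fin n → K) (ha : ∀ i, a i ≠ 0)
    (ℓ : Fin n → Fin n → K) (hℓ : LinearIndependent K ℓ)
    (d : ℕ) (hd : 2 ≤ d)
    (f : MvPolynomial (Fin n) K)
    (hf : f = ∑ i, MvPolynomial.C (a i) *
      (∑ j, MvPolynomial.C (ℓ i j) * MvPolynomial.X j) ^ d) :
    ∃ c : K, c ≠ 0 ∧
      (Matrix.of (fun i j => MvPolynomial.pderiv i (MvPolynomial.pderiv j f))).det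
        = MvPolynomial.C c *
          ∏ i, (∑ j, MvPolynomial.C (ℓ i j) * MvPolynomial.X j) ^ (d - 2) ∧
      (Matrix.of (fun i j => MvPolynomial.pderiv i (MvPolynomial.pderiv j f))).det ≠ 0 := by
  classical
  set L : Fin n → MvPolynomial (Fin n) K := fun k => ∑ j, C (ℓ k j) * X j with hLdef
  -- derivative of a linear form
  have hpL : ∀ (k : Fin n) (j : Fin n), pderiv j (L k) = C (ℓ k j) := by
    intro k j
    simp [hLdef, pderiv_X, Pi.single_apply, mul_ite, mul_one, mul_zero, Finset.sum_ite_eq']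
  -- second derivatives
  have hentry : ∀ i j : Fin n, pderiv i (pderiv j f)
      = ∑ k, C (ℓ k i) * (C (a k * (d * (d-1) : ℕ)) * L k ^ (d-2)) * C (ℓ k j) := by
    intro i j
    rw [hf]
    rw [map_sum, map_sum]
    refine Finset.sum_congr rfl fun k _ => ?_
    rw [pderiv_C_mul, pderiv_pow, hpL]
    simp only [pderiv_mul, pderiv_pow, hpL, MvPolynomial.pderiv_C, Derivation.map_natCast,
      zero_mul, mul_zero, add_zero, zero_add]
    have h1 : d - 1 - 1 = d - 2 := by omega
    rw [h1]
    rw [show (∑ x, C (ℓ k x) * X x : MvPolynomial (Fin n) K) = L k from rfl, hpL]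
    simp only [Nat.cast_mul, _root_.map_mul, map_natCast]
    ring
  -- the Hessian matrix factors
  set A : Matrix (Fin n) (Fin n) (MvPolynomial (Fin n) K) := (Matrix.of ℓ).map C with hA
  set D : Matrix (Fin n) (Fin n) (MvPolynomial (Fin n) K) :=
    Matrix.diagonal (fun k => C (a k * (d * (d-1) : ℕ)) * L k ^ (d-2)) with hD
  have hfac : (Matrix.of (fun i j => pderiv i (pderiv j f))) = Aᵀ * D * A := by
    apply Matrix.ext
    intro i j
    rw [Matrix.mul_apply]
    simp only [Matrix.mul_apply, hD, Matrix.diagonal_apply, Matrix.transpose_apply, hA,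
      Matrix.map_apply, Matrix.of_apply, mul_ite, mul_zero, ite_mul, zero_mul,
      Finset.sum_ite_eq', Finset.mem_univ, if_true]
    exact hentry i j
  have hdetA : A.det = C (Matrix.of ℓ).det :=
    ((MvPolynomial.C : K →+* MvPolynomial (Fin n) K).map_det (Matrix.of ℓ)).symm
  have hdetℓ : (Matrix.of ℓ).det ≠ 0 := by
    have : IsUnit (Matrix.of ℓ) := Matrix.linearIndependent_rows_iff_isUnit.mp hℓ
    exact ((Matrix.isUnit_iff_isUnit_det _).mp this).ne_zero
  -- the constant
  refine ⟨(Matrix.of ℓ).det ^ 2 * ∏ k, (a k * (d * (d-1) : ℕ)), ?_, ?_, ?_⟩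
  · have hdd : ((d * (d-1) : ℕ) : K) ≠ 0 := by
      have : 0 < d * (d - 1) := by
        have : 1 ≤ d - 1 := by omega
        nlinarith
      exact_mod_cast Nat.cast_ne_zero.mpr this.ne'
    refine mul_ne_zero (pow_ne_zero _ hdetℓ) (Finset.prod_ne_zero_iff.mpr fun k _ =>
      mul_ne_zero (ha k) hdd)
  · rw [hfac, Matrix.det_mul, Matrix.det_mul, Matrix.det_transpose, hdetA, hD,
      Matrix.det_diagonal, Finset.prod_mul_distrib, ← map_prod]
    rw [show (C ((Matrix.of ℓ).det ^ 2 * ∏ k, (a k * ((d * (d-1) : ℕ) : K)))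
          : MvPolynomial (Fin n) K)
        = C ((Matrix.of ℓ).det) * C (∏ k, (a k * ((d * (d-1) : ℕ) : K)))
          * C ((Matrix.of ℓ).det) by
      rw [← MvPolynomial.C_mul, ← MvPolynomial.C_mul]; congr 1; ring]
    simp only [hLdef]
    ring
  · rw [hfac, Matrix.det_mul, Matrix.det_mul, Matrix.det_transpose, hdetA, hD,
      Matrix.det_diagonal]
    have hL0 : ∀ k, L k ≠ 0 := by
      intro k hk
      have hk0 : ℓ k ≠ 0 := fun h => hℓ.ne_zero k h
      obtain ⟨j, hj⟩ := Function.ne_iff.mp hk0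
      have : MvPolynomial.coeff (Finsupp.single j 1) (L k) = ℓ k j := by
        simp [hLdef, MvPolynomial.coeff_sum, MvPolynomial.coeff_C_mul, MvPolynomial.coeff_X',
          Finsupp.single_left_inj, Finset.sum_ite_eq']
      rw [hk] at this
      simp at this
      exact hj this.symm
    refine mul_ne_zero (mul_ne_zero ?_ ?_) ?_
    · simpa using hdetℓ
    · exact Finset.prod_ne_zero_iff.mpr fun k _ => mul_ne_zero
        (by simpa using mul_ne_zero (ha k) (by
          have : 0 < d * (d - 1) := by
            have : 1 ≤ d - 1 := by omega
            nlinarith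
          exact_mod_cast Nat.cast_ne_zero.mpr this.ne' : ((d * (d-1) : ℕ) : K) ≠ 0))
        (pow_ne_zero _ (hL0 k))
    · simpa using hdetℓ
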